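/- Let M > 0 be an integer, a ∈ ℝ, and let f : ℝ → ℝ be bounded. Define g : ℝ → ℝ by g(y) = 0 for y < −M+a+1, g(y) = 2f(y−1) for y ∈ [−M+a+1, −M+a+3), g(y) = 2f(y−1) − g(y−2) for y ∈ [−M+a+3, M+a+1], and g(y) = −g(y−2) for y > M+a+1. Then ‖g‖_∞ ≤ 4M‖f‖_∞, and the two-point average (g(x+1)+g(x−1))/2 equals f(x) for all x ∈ [−M+a, M+a] and equals 0 for all x outside [−M+a, M+a]. -/
import Mathlib


/-- The telescoping construction for the channel `Y = X ± 1` (each with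
probability 1/2): for the function `g` defined by the recursion
`g(y) = 0` for `y < −M+a+1`, `g(y) = 2f(y−1)` on `[−M+a+1, −M+a+3)`,
`g(y) = 2f(y−1) − g(y−2)` on `[−M+a+3, M+a+1]`, and `g(y) = −g(y−2)` for `y > M+a+1`,
one has `‖g‖_∞ ≤ 4M‖f‖_∞`, and the two-point average `(g(x+1)+g(x−1))/2` equals `f(x)` on
`[−M+a, M+a]` and equals `0` outside `[−M+a, M+a]`. -/
theorem telescoping_local_observability
    (M : ℕ) (hM : 0 < M) (a : ℝ) (f : ℝ → ℝ)
    (C : ℝ) (hf : ∀ x, |f x| ≤ C)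
    (g : ℝ → ℝ)
    (h0 : ∀ y : ℝ, y < -(M : ℝ) + a + 1 → g y = 0)
    (h1 : ∀ y : ℝ, -(M : ℝ) + a + 1 ≤ y → y < -(M : ℝ) + a + 3 → g y = 2 * f (y - 1))
    (h2 : ∀ y : ℝ, -(M : ℝ) + a + 3 ≤ y → y ≤ (M : ℝ) + a + 1 →
      g y = 2 * f (y - 1) - g (y - 2))
    (h3 : ∀ y : ℝ, (M : ℝ) + a + 1 < y → g y = -g (y - 2)) :
    (∀ y : ℝ, |g y| ≤ 4 * M * C) ∧
    (∀ x : ℝ, -(M : ℝ) + a ≤ x → x ≤ (M : ℝ) + a → (g (x + 1) + g (x - 1)) / 2 = f x) ∧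
    (∀ x : ℝ, (x < -(M : ℝ) + a ∨ (M : ℝ) + a < x) → (g (x + 1) + g (x - 1)) / 2 = 0) := by
  have hC : 0 ≤ C := le_trans (abs_nonneg _) (hf 0)
  -- ramp bound up to M+a+1
  have key : ∀ n : ℕ, ∀ y : ℝ, y < -(M : ℝ) + a + 1 + 2 * n → y ≤ (M : ℝ) + a + 1 →
      |g y| ≤ 2 * n * C := by
    intro n
    induction n with
    | zero =>
      intro y hy _
      rw [h0 y (by push_cast at hy ⊢; linarith)]
      simp
    | succ n ih =>
      intro y hy hy'
      push_cast at hy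
      rcases lt_or_ge y (-(M : ℝ) + a + 1) with h | h
      · rw [h0 y h]
        simp only [abs_zero]
        positivity
      rcases lt_or_ge y (-(M : ℝ) + a + 3) with h' | h'
      · rw [h1 y h h', abs_mul, abs_two]
        have hfy := hf (y - 1)
        have hn0 : (0 : ℝ) ≤ (n : ℝ) := n.cast_nonneg
        push_cast
        nlinarith
      · rw [h2 y h' hy']
        have hprev : |g (y - 2)| ≤ 2 * n * C := by
          apply ih
          · linarith
          · linarith
        have := hf (y - 1)
        calc |2 * f (y - 1) - g (y - 2)| ≤ |2 * f (y - 1)| + |g (y - 2)| := abs_sub _ _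
          _ ≤ 2 * C + 2 * n * C := by
              rw [abs_mul, abs_two]
              have := hf (y - 1)
              nlinarith
          _ = 2 * (n + 1 : ℕ) * C := by push_cast; ring
  have bound : ∀ y : ℝ, |g y| ≤ 4 * M * C := by
    have base : ∀ y : ℝ, y ≤ (M : ℝ) + a + 1 → |g y| ≤ 4 * M * C := by
      intro y hy
      have := key (M + 1) y (by push_cast; linarith) hy
      have hM1 : (1 : ℝ) ≤ (M : ℝ) := by exact_mod_cast hM
      calc |g y| ≤ 2 * (M + 1 : ℕ) * C := this
        _ ≤ 4 * M * C := by push_cast; nlinarith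
    have tail : ∀ n : ℕ, ∀ y : ℝ, y ≤ (M : ℝ) + a + 1 + 2 * n → |g y| ≤ 4 * M * C := by
      intro n
      induction n with
      | zero => intro y hy; exact base y (by push_cast at hy; linarith)
      | succ n ih =>
        intro y hy
        push_cast at hy
        rcases le_or_gt y ((M : ℝ) + a + 1 + 2 * n) with h | h
        · exact ih y (by linarith)
        · have hn0 : (0 : ℝ) ≤ (n : ℝ) := n.cast_nonneg
          rw [h3 y (by linarith), abs_neg]
          exact ih (y - 2) (by linarith)
    intro y
    obtain ⟨n, hn⟩ := exists_nat_ge ((y - ((M : ℝ) + a + 1)) / 2)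
    exact tail n y (by linarith)
  refine ⟨bound, ?_, ?_⟩
  · intro x hx1 hx2
    rcases lt_or_ge (x + 1) (-(M : ℝ) + a + 3) with h | h
    · rw [h1 (x + 1) (by linarith) h, h0 (x - 1) (by linarith)]
      ring_nf
    · rw [h2 (x + 1) h (by linarith)]
      ring_nf
  · intro x hx
    rcases hx with h | h
    · rw [h0 (x + 1) (by linarith), h0 (x - 1) (by linarith)]
      norm_num
    · rw [h3 (x + 1) (by linarith)]
      ring_nf
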